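/- For every reactive Turing machine M, the transition system T(M) associated with M is divergence-preserving branching bisimilar to the LTS of the parallel composition of M's finite control with the tape process: T(M) ≈Δb T_{Efc ∪ E∞T}([ C_{↑,□} ∥ T_□̌ ]_{{r,w,m}}). -/

import Mathlib

namespace RTMPaper

/-! ## Labelled transition systems

An `A`-labelled transition system; transition labels are drawn from `Option A`,
where `none` plays the role of the unobservable action τ. -/

structure LTS (A : Type) where
  State : Type
  tr : State → Option A → State → Prop
  init : State
  final : Set State

namespace LTS

variable {A : Type}

/-- A τ-step. -/
def tauStep (T : LTS A) (s t : T.State) : Prop := T.tr s none t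

/-- `⇒` : the reflexive–transitive closure of τ-steps. -/
def tauReach (T : LTS A) : T.State → T.State → Prop :=
  Relation.ReflTransGen T.tauStep

/-- `s —(a)→ t` : either `s —a→ t`, or `a = τ` and `s = t`. -/
def optStep (T : LTS A) (s : T.State) (a : Option A) (t : T.State) : Prop :=
  T.tr s a t ∨ (a = none ∧ s = t)

/-- The set of outgoing transitions of a state. -/
def out (T : LTS A) (s : T.State) : Set (Option A × T.State) :=
  {p | T.tr s p.1 p.2}

def FinitelyBranching (T : LTS A) : Prop := ∀ s, (T.out s).Finite

/-- The branching degree of `T` is bounded by `B`. -/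
def BranchingDegreeBoundedBy (T : LTS A) (B : ℕ) : Prop :=
  ∀ s, (T.out s).Finite ∧ (T.out s).ncard ≤ B

def BoundedlyBranching (T : LTS A) : Prop := ∃ B, T.BranchingDegreeBoundedBy B

/-- A deterministic transition system. -/
def Deterministic (T : LTS A) : Prop :=
  (∀ s a t₁ t₂, T.tr s a t₁ → T.tr s a t₂ → t₁ = t₂) ∧
  (∀ s t, T.tr s none t → ∀ a u, T.tr s a u → a = none)

/-- Relabelling of an LTS along a map of action alphabets (τ is mapped to τ). -/
def relabel {A' : Type} (f : A → A') (T : LTS A) : LTS A' where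
  State := T.State
  tr s a t := ∃ a₀ : Option A, T.tr s a₀ t ∧ a = Option.map f a₀
  init := T.init
  final := T.final

end LTS

/-! ## (Divergence-preserving) branching bisimilarity -/

structure IsBranchingBisimulation {A : Type} (T₁ T₂ : LTS A)
    (R : T₁.State → T₂.State → Prop) : Prop where
  fwd : ∀ s₁ s₂ a s₁', R s₁ s₂ → T₁.tr s₁ a s₁' →
    ∃ s₂'' s₂', T₂.tauReach s₂ s₂'' ∧ T₂.optStep s₂'' a s₂' ∧ R s₁ s₂'' ∧ R s₁' s₂'
  bwd : ∀ s₁ s₂ a s₂', R s₁ s₂ → T₂.tr s₂ a s₂' →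
    ∃ s₁'' s₁', T₁.tauReach s₁ s₁'' ∧ T₁.optStep s₁'' a s₁' ∧ R s₁'' s₂ ∧ R s₁' s₂'
  finFwd : ∀ s₁ s₂, R s₁ s₂ → s₁ ∈ T₁.final →
    ∃ s₂', T₂.tauReach s₂ s₂' ∧ R s₁ s₂' ∧ s₂' ∈ T₂.final
  finBwd : ∀ s₁ s₂, R s₁ s₂ → s₂ ∈ T₂.final →
    ∃ s₁', T₁.tauReach s₁ s₁' ∧ R s₁' s₂ ∧ s₁' ∈ T₁.final

/-- The divergence-preservation conditions on a branching bisimulation. -/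
def DivergencePreserving {A : Type} (T₁ T₂ : LTS A)
    (R : T₁.State → T₂.State → Prop) : Prop :=
  (∀ (s₂ : T₂.State) (f : ℕ → T₁.State),
      (∀ i, T₁.tauStep (f i) (f (i + 1))) → (∀ i, R (f i) s₂) →
      ∃ s₂', Relation.TransGen T₂.tauStep s₂ s₂' ∧ ∃ i, R (f i) s₂') ∧
  (∀ (s₁ : T₁.State) (f : ℕ → T₂.State),
      (∀ i, T₂.tauStep (f i) (f (i + 1))) → (∀ i, R s₁ (f i)) →
      ∃ s₁', Relation.TransGen T₁.tauStep s₁ s₁' ∧ ∃ i, R s₁' (f i))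

/-- `T₁ ≈b T₂` : branching bisimilarity. -/
def BranchingBisimilar {A : Type} (T₁ T₂ : LTS A) : Prop :=
  ∃ R, IsBranchingBisimulation T₁ T₂ R ∧ R T₁.init T₂.init

/-- `T₁ ≈Δb T₂` : divergence-preserving branching bisimilarity. -/
def DPBranchingBisimilar {A : Type} (T₁ T₂ : LTS A) : Prop :=
  ∃ R, IsBranchingBisimulation T₁ T₂ R ∧ DivergencePreserving T₁ T₂ R ∧
    R T₁.init T₂.init

/-! ## Effective and computable transition systems -/

/-- A set of natural numbers is recursively enumerable. -/
def REset (X : Set ℕ) : Prop :=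
  ∃ f : ℕ →. Unit, Partrec f ∧ ∀ n, (f n).Dom ↔ n ∈ X

/-- A (finitely branching) LTS is computable if, with respect to some injective
codings of its labels and states into ℕ, the functions `out` and `fin` are
recursive. -/
def LTS.IsComputable {A : Type} (T : LTS A) : Prop :=
  ∃ hfb : ∀ s, (T.out s).Finite,
    ∃ (cL : Option A → ℕ) (cS : T.State → ℕ),
      Function.Injective cL ∧ Function.Injective cS ∧
      (∃ fo : ℕ → ℕ, Computable fo ∧ ∀ s,
        fo (cS s) =
          Encodable.encode
            (((hfb s).toFinset).image fun p => Nat.pair (cL p.1) (cS p.2))) ∧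
      (∃ ff : ℕ → ℕ, Computable ff ∧ ∀ s,
        (s ∈ T.final → ff (cS s) = 1) ∧ (s ∉ T.final → ff (cS s) = 0))

/-- A (finitely branching) LTS is effective if, with respect to some injective
codings of its labels and states into ℕ, its transition relation and its set of
final states are recursively enumerable. -/
def LTS.IsEffective {A : Type} (T : LTS A) : Prop :=
  T.FinitelyBranching ∧
  ∃ (cL : Option A → ℕ) (cS : T.State → ℕ),
    Function.Injective cL ∧ Function.Injective cS ∧
    REset {n | ∃ s a t, T.tr s a t ∧ n = Nat.pair (cS s) (Nat.pair (cL a) (cS t))} ∧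
    REset {n | ∃ s ∈ T.final, n = cS s}

/-! ## Reactive Turing machines -/

inductive Move : Type
  | L | R
deriving DecidableEq

instance instFintypeMove : Fintype Move where
  elems := {Move.L, Move.R}
  complete := by intro x; cases x <;> simp

/-- A tape instance: the content left of the head (nearest symbol first), the
symbol under the head, and the content right of the head (nearest symbol
first).  Tape symbols are `Option D`, with `none` the blank symbol □. -/
structure Tape (D : Type) where
  left : List (Option D)
  head : Option D
  right : List (Option D)

def Tape.empty (D : Type) : Tape D := ⟨[], none, []⟩

/-- Write `e` at the head position and move the head in direction `m`. -/
def Tape.writeMove {D : Type} (t : Tape D) (e : Option D) : Move → Tape D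
  | .L =>
    match t.left with
    | [] => ⟨[], none, e :: t.right⟩
    | x :: l => ⟨l, x, e :: t.right⟩
  | .R =>
    match t.right with
    | [] => ⟨e :: t.left, none, []⟩
    | x :: r => ⟨e :: t.left, x, r⟩

/-- A reactive Turing machine with action symbols `A` (labels `Option A`,
`none` being τ) and data symbols `D` (tape symbols `Option D`, `none` being
the blank symbol). -/
structure RTM (A D : Type) where
  Q : Type
  [instQ : Fintype Q]
  trans : Q → Option D → Option A → Option D → Move → Q → Prop
  init : Q
  final : Set Q

attribute [instance] RTM.instQ

/-- The transition system `T(M)` associated with an RTM `M`. -/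
def RTM.lts {A D : Type} (M : RTM A D) : LTS A where
  State := M.Q × Tape D
  tr c a c' := ∃ e m, M.trans c.1 c.2.head a e m c'.1 ∧ c'.2 = c.2.writeMove e m
  init := (M.init, Tape.empty D)
  final := {c | c.1 ∈ M.final}

def RTM.Deterministic {A D : Type} (M : RTM A D) : Prop :=
  (∀ s d a e₁ m₁ t₁ e₂ m₂ t₂, M.trans s d a e₁ m₁ t₁ → M.trans s d a e₂ m₂ t₂ →
      e₁ = e₂ ∧ m₁ = m₂ ∧ t₁ = t₂) ∧
  (∀ s d e₁ m₁ t₁, M.trans s d none e₁ m₁ t₁ →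
      ∀ a e₂ m₂ t₂, M.trans s d a e₂ m₂ t₂ → a = none)

/-! ## Actions over channels, and parallel composition -/

/-- Actions over a set `C` of channels with communicated values in `V`,
together with further (base) actions from `B`:  `recv c v` is `c?v`,
`send c v` is `c!v`. -/
inductive CAct (C V B : Type) : Type
  | recv : C → V → CAct C V B
  | send : C → V → CAct C V B
  | base : B → CAct C V B
deriving DecidableEq

/-- The (possibly silent) action `a` is a communication action on one of the
channels in `C'`. -/
def IsComm {C V B : Type} (C' : Set C) : Option (CAct C V B) → Prop
  | some (.recv c _) => c ∈ C'
  | some (.send c _) => c ∈ C'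
  | _ => False

/-- Parallel composition `[T₁ ∥ T₂]_{C'}` of transition systems, enforcing
communication on the channels in `C'`. -/
def parLTS {C V B : Type} (C' : Set C) (T₁ T₂ : LTS (CAct C V B)) :
    LTS (CAct C V B) where
  State := T₁.State × T₂.State
  init := (T₁.init, T₂.init)
  final := {p | p.1 ∈ T₁.final ∧ p.2 ∈ T₂.final}
  tr p a p' :=
    ¬ IsComm C' a ∧
    ((T₁.tr p.1 a p'.1 ∧ p.2 = p'.2) ∨
     (T₂.tr p.2 a p'.2 ∧ p.1 = p'.1) ∨
     (a = none ∧ ∃ c ∈ C', ∃ d : V,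
        (T₁.tr p.1 (some (.send c d)) p'.1 ∧ T₂.tr p.2 (some (.recv c d)) p'.2) ∨
        (T₁.tr p.1 (some (.recv c d)) p'.1 ∧ T₂.tr p.2 (some (.send c d)) p'.2)))

/-- The behaviour of `sender(M)`: output the symbols of `w` one by one along
channel `cu`, then halt in a final state. -/
def outputLTS {C V B : Type} (cu : C) (w : List V) : LTS (CAct C V B) where
  State := List V
  tr s a t := ∃ d, s = d :: t ∧ a = some (.send cu d)
  init := w
  final := {([] : List V)}

/-- A concrete (syntactic, Gödel-numberable) presentation of a reactive Turing
machine: states are `Fin (n+1)`, and the transition relation is a finite set of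
tuples. -/
structure RTMc (A D : Type) where
  n : ℕ
  trans : Finset (Fin (n + 1) × Option D × Option A × Option D × Move × Fin (n + 1))
  init : Fin (n + 1)
  final : Finset (Fin (n + 1))

def RTMc.toRTM {A D : Type} (M : RTMc A D) : RTM A D where
  Q := Fin (M.n + 1)
  trans s d a e m t := (s, d, a, e, m, t) ∈ M.trans
  init := M.init
  final := (↑M.final : Set (Fin (M.n + 1)))

end RTMPaper

namespace RTMPaper

/-! ## A process calculus (TCP_τ without sequential composition) -/

/-- Process expressions: deadlock `0`, skip `1`, action prefix, alternative
composition, parallel composition (enforcing communication on a set of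
channels), and names. -/
inductive PExp (C V B N : Type) : Type
  | dl : PExp C V B N
  | emp : PExp C V B N
  | pref : Option (CAct C V B) → PExp C V B N → PExp C V B N
  | alt : PExp C V B N → PExp C V B N → PExp C V B N
  | par : Set C → PExp C V B N → PExp C V B N → PExp C V B N
  | name : N → PExp C V B N

namespace PExp

def names {C V B N : Type} : PExp C V B N → Set N
  | .dl => ∅
  | .emp => ∅
  | .pref _ p => p.names
  | .alt p q => p.names ∪ q.names
  | .par _ p q => p.names ∪ q.names
  | .name n => {n}

def mapNames {C V B N N' : Type} (f : N → N') : PExp C V B N → PExp C V B N'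
  | .dl => .dl
  | .emp => .emp
  | .pref a p => .pref a (p.mapNames f)
  | .alt p q => .alt (p.mapNames f) (q.mapNames f)
  | .par C' p q => .par C' (p.mapNames f) (q.mapNames f)
  | .name n => .name (f n)

end PExp

/-- A recursive specification over the names `N` is a partial map from names to
process expressions (the defining equations). -/
def SpecWF {C V B N : Type} (E : N → Option (PExp C V B N)) : Prop :=
  ∀ n p, E n = some p → ∀ m ∈ PExp.names p, (E m).isSome

/-- All names occurring in `p` have a defining equation in `E`. -/
def DefinedIn {C V B N : Type} (E : N → Option (PExp C V B N))
    (p : PExp C V B N) : Prop :=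
  ∀ m ∈ PExp.names p, (E m).isSome

/-- The termination predicate `↓` of the structural operational semantics. -/
inductive Term {C V B N : Type} (E : N → Option (PExp C V B N)) :
    PExp C V B N → Prop
  | emp : Term E .emp
  | altL {p q} : Term E p → Term E (.alt p q)
  | altR {p q} : Term E q → Term E (.alt p q)
  | par {C' p q} : Term E p → Term E q → Term E (.par C' p q)
  | name {n p} : E n = some p → Term E p → Term E (.name n)

/-- The transition relation of the structural operational semantics. -/
inductive Step {C V B N : Type} (E : N → Option (PExp C V B N)) :
    PExp C V B N → Option (CAct C V B) → PExp C V B N → Prop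
  | pref {a p} : Step E (.pref a p) a p
  | altL {p q a p'} : Step E p a p' → Step E (.alt p q) a p'
  | altR {p q a q'} : Step E q a q' → Step E (.alt p q) a q'
  | parL {C' p q a p'} : Step E p a p' → ¬ IsComm C' a →
      Step E (.par C' p q) a (.par C' p' q)
  | parR {C' p q a q'} : Step E q a q' → ¬ IsComm C' a →
      Step E (.par C' p q) a (.par C' p q')
  | syncSR {C' : Set C} {p q p' q' c d} : c ∈ C' →
      Step E p (some (.send c d)) p' → Step E q (some (.recv c d)) q' →
      Step E (.par C' p q) none (.par C' p' q')
  | syncRS {C' : Set C} {p q p' q' c d} : c ∈ C' →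
      Step E p (some (.recv c d)) p' → Step E q (some (.send c d)) q' →
      Step E (.par C' p q) none (.par C' p' q')
  | name {n p a p'} : E n = some p → Step E p a p' → Step E (.name n) a p'

/-- The process expressions reachable from `p` under the semantics of `E`. -/
def Reach {C V B N : Type} (E : N → Option (PExp C V B N))
    (p : PExp C V B N) : Set (PExp C V B N) :=
  {q | Relation.ReflTransGen (fun x y => ∃ a, Step E x a y) p q}

/-- The transition system `T_E(p)` associated with the process expression `p`
and the recursive specification `E`. -/
def pLTS {C V B N : Type} (E : N → Option (PExp C V B N))
    (p : PExp C V B N) : LTS (CAct C V B) where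
  State := {q // q ∈ Reach E p}
  tr s a t := Step E s.1 a t.1
  init := ⟨p, Relation.ReflTransGen.refl⟩
  final := {s | Term E s.1}

/-- A deterministic internal computation from `s` to `s'` with respect to a
transition relation `tr`. -/
def DetInternalComp {S A : Type} (tr : S → Option A → S → Prop)
    (s s' : S) : Prop :=
  ∃ (n : ℕ) (f : ℕ → S), f 0 = s ∧ f n = s' ∧
    (∀ i < n, tr (f i) none (f (i + 1))) ∧
    (∀ i < n, ∀ a u, tr (f i) a u → a = none ∧ u = f (i + 1))

/-! ### Finite sums of process expressions -/

def bigAlt {C V B N : Type} (l : List (PExp C V B N)) : PExp C V B N :=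
  l.foldr PExp.alt PExp.dl

/-- `Σ_{x ∈ l} f x`. -/
def sumList {C V B N ι : Type} (l : List ι) (f : ι → PExp C V B N) :
    PExp C V B N :=
  bigAlt (l.map f)

/-- The list of all elements of a finite type. -/
noncomputable def allOf (ι : Type) [Fintype ι] : List ι := Finset.univ.toList

/-- The disjoint union of two recursive specifications. -/
def combineSpec {C V B N₁ N₂ : Type}
    (E₁ : N₁ → Option (PExp C V B N₁)) (E₂ : N₂ → Option (PExp C V B N₂)) :
    N₁ ⊕ N₂ → Option (PExp C V B (N₁ ⊕ N₂))
  | .inl n => (E₁ n).map (PExp.mapNames Sum.inl)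
  | .inr n => (E₂ n).map (PExp.mapNames Sum.inr)

/-! ### Queue specifications -/

/-- The infinite specification `E∞Q` of a FIFO queue over the alphabet `al`
with input channel `ci` and output channel `co`; the name of a state of the
queue is its contents (a string, insertion at the left, removal at the
right). -/
def infQueueSpec (C B V : Type) (al : List V) (ci co : C) :
    List V → Option (PExp C V B (List V)) := fun l =>
  some <|
    match l.getLast? with
    | none =>
        .alt (sumList al fun d => .pref (some (.recv ci d)) (.name [d])) .emp
    | some d =>
        .alt (.alt (.pref (some (.send co d)) (.name l.dropLast))
          (sumList al fun e => .pref (some (.recv ci e)) (.name (e :: l)))) .emp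

/-- The finite Bergstra–Klop queue specification `EQ` (with added `1`-summands):
for channels `(j,k,p)`,
`Q^{jk}_p ≝ Σ_d j?d.[ Q^{jp}_k ∥ (1 + k!d.Q^{pk}_j) ]_{{p}} + 1`. -/
def bkQueueSpec (C B V : Type) (al : List V) :
    C × C × C → Option (PExp C V B (C × C × C)) := fun jkp =>
  some <| .alt
    (sumList al fun d => .pref (some (.recv jkp.1 d))
      (.par {jkp.2.2} (.name (jkp.1, jkp.2.2, jkp.2.1))
        (.alt .emp (.pref (some (.send jkp.2.1 d)) (.name (jkp.2.2, jkp.2.1, jkp.1))))))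
    .emp

/-! ### Tape specifications -/

/-- Symbols communicated in the tape/queue specifications: tape symbols
(`dat d` for `d ∈ D□`), the fresh symbols `⊥` and `$`, and the move
instructions `L` and `R`. -/
inductive Sym (D : Type) : Type
  | dat : Option D → Sym D
  | bot : Sym D
  | dollar : Sym D
  | mvL : Sym D
  | mvR : Sym D
deriving DecidableEq

instance {D : Type} [Fintype D] [DecidableEq D] : Fintype (Sym D) where
  elems := ((Finset.univ : Finset (Option D)).image Sym.dat) ∪
    {Sym.bot, Sym.dollar, Sym.mvL, Sym.mvR}
  complete := by intro x; cases x <;> simp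

/-- The queue alphabet `D□ ∪ {⊥, $}`. -/
noncomputable def qAlphList (D : Type) [Fintype D] [DecidableEq D] : List (Sym D) :=
  ((Finset.univ : Finset (Sym D)).filter fun v => v ≠ Sym.mvL ∧ v ≠ Sym.mvR).toList

def dmap {D : Type} (l : List (Option D)) : List (Sym D) := l.map Sym.dat

def movSym {D : Type} : Move → Sym D
  | .L => .mvL
  | .R => .mvR

/-- Names of the finite tape-controller specification `ET`. -/
inductive TName (D : Type) : Type
  | H : Option D → TName D
  | HL : Option D → TName D
  | HR : Option D → TName D
  | Back : TName D
  | Fwd : Option D → TName D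
  | FwdBot : TName D

/-- The finite tape-controller specification `ET`, with read channel `cr`,
write channel `cw`, move channel `cm`, and a queue interface on channels
`ci` (insert) and `co` (remove). -/
noncomputable def tapeCtrlSpec (C D B : Type) [Fintype D] (ci co cr cw cm : C) :
    TName D → Option (PExp C (Sym D) B (TName D))
  | .H d => some <| .alt (.alt (.alt (.alt
      (.pref (some (.send cr (.dat d))) (.name (.H d)))
      (sumList (allOf (Option D)) fun e =>
        .pref (some (.recv cw (.dat e))) (.name (.H e))))
      (.pref (some (.recv cm .mvL)) (.name (.HL d))))
      (.pref (some (.recv cm .mvR)) (.name (.HR d))))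
      .emp
  | .HL d => some <| .pref (some (.send ci (.dat d)))
      (.alt (sumList (allOf (Option D)) fun e =>
          .pref (some (.recv co (.dat e))) (.name (.H e)))
        (.pref (some (.recv co .bot))
          (.pref (some (.send ci .dollar))
            (.pref (some (.send ci .bot)) (.name .Back)))))
  | .Back => some <| .alt
      (sumList (allOf (Option D)) fun d =>
        .pref (some (.recv co (.dat d)))
          (.pref (some (.send ci (.dat d))) (.name .Back)))
      (.pref (some (.recv co .dollar)) (.name (.H none)))
  | .HR d => some <| .pref (some (.send ci .dollar))
      (.pref (some (.send ci (.dat d)))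
        (.alt (sumList (allOf (Option D)) fun e =>
            .pref (some (.recv co (.dat e))) (.name (.Fwd e)))
          (.pref (some (.recv co .bot)) (.name .FwdBot))))
  | .Fwd d => some <| .alt (.alt
      (sumList (allOf (Option D)) fun e =>
        .pref (some (.recv co (.dat e)))
          (.pref (some (.send ci (.dat d))) (.name (.Fwd e))))
      (.pref (some (.recv co .bot))
        (.pref (some (.send ci (.dat d))) (.name .FwdBot))))
      (.pref (some (.recv co .dollar)) (.name (.H d)))
  | .FwdBot => some <| .alt
      (sumList (allOf (Option D)) fun e =>
        .pref (some (.recv co (.dat e)))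
          (.pref (some (.send ci .bot)) (.name (.Fwd e))))
      (.pref (some (.recv co .dollar))
        (.pref (some (.send ci .bot)) (.name (.H none))))

/-- The infinite tape specification `E∞T`: one name for every tape instance,
with read channel `cr`, write channel `cw` and move channel `cm`. -/
noncomputable def infTapeSpec (C B D : Type) [Fintype D] (cr cw cm : C) :
    Tape D → Option (PExp C (Sym D) B (Tape D)) := fun t =>
  some <| .alt (.alt (.alt (.alt
    (.pref (some (.send cr (.dat t.head))) (.name t))
    (sumList (allOf (Option D)) fun e =>
      .pref (some (.recv cw (.dat e))) (.name ⟨t.left, e, t.right⟩)))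
    (.pref (some (.recv cm .mvL)) (.name (t.writeMove t.head .L))))
    (.pref (some (.recv cm .mvR)) (.name (t.writeMove t.head .R))))
    .emp

/-- The finite-control specification `Efc` of an RTM `M`:
`C_{s,d} ≝ Σ_{(s,d,a,e,Mv,t) ∈ →} a.w!e.m!Mv.Σ_{f∈D□} r?f.C_{t,f}`,
with an additional summand `1` iff `s` is a final state of `M`. -/
noncomputable def fcSpec {C D B : Type} [Fintype D] [Fintype B]
    (M : RTM B D) (cr cw cm : C) :
    M.Q × Option D → Option (PExp C (Sym D) B (M.Q × Option D)) := fun sd =>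
  let base : PExp C (Sym D) B (M.Q × Option D) :=
    bigAlt ((((Set.toFinite {x : Option B × Option D × Move × M.Q |
        M.trans sd.1 sd.2 x.1 x.2.1 x.2.2.1 x.2.2.2}).toFinset).toList).map fun x =>
      .pref (Option.map CAct.base x.1)
        (.pref (some (.send cw (.dat x.2.1)))
          (.pref (some (.send cm (movSym x.2.2.1)))
            (sumList (allOf (Option D)) fun f =>
              .pref (some (.recv cr (.dat f))) (.name (x.2.2.2, f))))))
  haveI := Classical.propDecidable (sd.1 ∈ M.final)
  some (if sd.1 ∈ M.final then .alt base .emp else base)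

end RTMPaper

namespace RTMPaper

/-- The finite-control specification of the RTM `M` combined with the infinite
tape specification. -/
noncomputable def EfcT {C D B : Type} [Fintype D] [Fintype B]
    (M : RTM B D) (cr cw cm : C) :
    ((M.Q × Option D) ⊕ Tape D) →
      Option (PExp C (Sym D) B ((M.Q × Option D) ⊕ Tape D)) :=
  combineSpec (fcSpec M cr cw cm) (infTapeSpec C B D cr cw cm)

section Generic
variable {C V B N : Type} {E : N → Option (PExp C V B N)}

lemma step_pref_iff {a p b q} : Step E (.pref a p) b q ↔ b = a ∧ q = p :=
  ⟨fun h => by cases h; exact ⟨rfl, rfl⟩, by rintro ⟨rfl, rfl⟩; exact .pref⟩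

lemma step_alt_iff {p q a r} : Step E (.alt p q) a r ↔ Step E p a r ∨ Step E q a r :=
  ⟨fun h => by cases h with
    | altL h => exact Or.inl h
    | altR h => exact Or.inr h,
   fun h => h.elim .altL .altR⟩

lemma step_emp_iff {a r} : Step E .emp a r ↔ False := Iff.intro (fun h => nomatch h) False.elim

lemma step_dl_iff {a r} : Step E .dl a r ↔ False := Iff.intro (fun h => nomatch h) False.elim

lemma step_name_iff {n a r} : Step E (.name n) a r ↔ ∃ p, E n = some p ∧ Step E p a r :=
  ⟨fun h => by cases h with | name hE h => exact ⟨_, hE, h⟩,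
   fun ⟨p, hE, h⟩ => .name hE h⟩

lemma bigAlt_nil : (bigAlt [] : PExp C V B N) = .dl := rfl
lemma bigAlt_cons {x : PExp C V B N} {l} : bigAlt (x :: l) = .alt x (bigAlt l) := rfl

lemma step_bigAlt_iff {l : List (PExp C V B N)} {a r} :
    Step E (bigAlt l) a r ↔ ∃ q ∈ l, Step E q a r := by
  induction l with
  | nil => simp [bigAlt_nil, step_dl_iff]
  | cons x l ih => simp [bigAlt_cons, step_alt_iff, ih]

lemma step_sumList_iff {ι : Type} {l : List ι} {f : ι → PExp C V B N} {a r} :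
    Step E (sumList l f) a r ↔ ∃ x ∈ l, Step E (f x) a r := by
  simp [sumList, step_bigAlt_iff]

lemma term_pref_iff {a p} : Term E (.pref a p) ↔ False := Iff.intro (fun h => nomatch h) False.elim
lemma term_dl_iff : Term E (.dl : PExp C V B N) ↔ False := Iff.intro (fun h => nomatch h) False.elim
lemma term_emp : Term E (.emp : PExp C V B N) := .emp

lemma term_alt_iff {p q} : Term E (.alt p q) ↔ Term E p ∨ Term E q :=
  ⟨fun h => by cases h with
    | altL h => exact Or.inl h
    | altR h => exact Or.inr h,
   fun h => h.elim .altL .altR⟩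

lemma term_par_iff {C' p q} : Term E (.par C' p q) ↔ Term E p ∧ Term E q :=
  ⟨fun h => by cases h with | par h1 h2 => exact ⟨h1, h2⟩, fun ⟨h1, h2⟩ => .par h1 h2⟩

lemma term_name_iff {n} : Term E (.name n) ↔ ∃ p, E n = some p ∧ Term E p :=
  ⟨fun h => by cases h with | name hE h => exact ⟨_, hE, h⟩,
   fun ⟨p, hE, h⟩ => .name hE h⟩

lemma term_bigAlt_iff {l : List (PExp C V B N)} :
    Term E (bigAlt l) ↔ ∃ q ∈ l, Term E q := by
  induction l with
  | nil => simp [bigAlt_nil, term_dl_iff]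
  | cons x l ih => simp [bigAlt_cons, term_alt_iff, ih]

lemma term_sumList_iff {ι : Type} {l : List ι} {f : ι → PExp C V B N} :
    Term E (sumList l f) ↔ ∃ x ∈ l, Term E (f x) := by
  simp [sumList, term_bigAlt_iff]

lemma step_par_iff {C' : Set C} {p q : PExp C V B N} {a r} :
    Step E (.par C' p q) a r ↔
      (¬ IsComm C' a ∧ ∃ p', Step E p a p' ∧ r = .par C' p' q) ∨
      (¬ IsComm C' a ∧ ∃ q', Step E q a q' ∧ r = .par C' p q') ∨
      (a = none ∧ ∃ c ∈ C', ∃ d p' q', r = .par C' p' q' ∧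
        ((Step E p (some (.send c d)) p' ∧ Step E q (some (.recv c d)) q') ∨
         (Step E p (some (.recv c d)) p' ∧ Step E q (some (.send c d)) q'))) := by
  constructor
  · intro h
    cases h with
    | parL h hnc => exact Or.inl ⟨hnc, _, h, rfl⟩
    | parR h hnc => exact Or.inr (Or.inl ⟨hnc, _, h, rfl⟩)
    | syncSR hc hp hq => exact Or.inr (Or.inr ⟨rfl, _, hc, _, _, _, rfl, Or.inl ⟨hp, hq⟩⟩)
    | syncRS hc hp hq => exact Or.inr (Or.inr ⟨rfl, _, hc, _, _, _, rfl, Or.inr ⟨hp, hq⟩⟩)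
  · rintro (⟨hnc, p', h, rfl⟩ | ⟨hnc, q', h, rfl⟩ |
      ⟨rfl, c, hc, d, p', q', rfl, (⟨hp, hq⟩ | ⟨hp, hq⟩)⟩)
    · exact .parL h hnc
    · exact .parR h hnc
    · exact .syncSR hc hp hq
    · exact .syncRS hc hp hq

lemma mapNames_bigAlt {N' : Type} (f : N → N') (l : List (PExp C V B N)) :
    (bigAlt l).mapNames f = bigAlt (l.map (PExp.mapNames f)) := by
  induction l with
  | nil => rfl
  | cons x l ih => rw [bigAlt_cons, List.map_cons, bigAlt_cons, ← ih]; rfl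

lemma mapNames_sumList {N' ι : Type} (f : N → N') (l : List ι) (g : ι → PExp C V B N) :
    (sumList l g).mapNames f = sumList l fun x => (g x).mapNames f := by
  simp [sumList, mapNames_bigAlt, List.map_map, Function.comp_def]

lemma mem_allOf {ι : Type} [Fintype ι] (x : ι) : x ∈ allOf ι := by
  simp [allOf]

lemma reach_tail {p₀ p q : PExp C V B N} {a} (hp : p ∈ Reach E p₀)
    (h : Step E p a q) : q ∈ Reach E p₀ :=
  Relation.ReflTransGen.tail hp ⟨a, h⟩

end Generic
section Main
variable {C D B : Type} [Fintype D] [Fintype B]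

/-- read stage control expression -/
noncomputable def rExp (cr : C) (M : RTM B D) (t : M.Q) :
    PExp C (Sym D) B ((M.Q × Option D) ⊕ Tape D) :=
  sumList (allOf (Option D)) fun f =>
    .pref (some (.recv cr (.dat f))) (.name (.inl (t, f)))

noncomputable def mExp (cr cm : C) (M : RTM B D) (mv : Move) (t : M.Q) :
    PExp C (Sym D) B ((M.Q × Option D) ⊕ Tape D) :=
  .pref (some (.send cm (movSym mv))) (rExp cr M t)

noncomputable def wExp (cr cw cm : C) (M : RTM B D) (e : Option D) (mv : Move) (t : M.Q) :
    PExp C (Sym D) B ((M.Q × Option D) ⊕ Tape D) :=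
  .pref (some (.send cw (.dat e))) (mExp cr cm M mv t)

lemma ctrl_step_iff {cr cw cm : C} {M : RTM B D} {s : M.Q} {d : Option D} {a p'} :
    Step (EfcT M cr cw cm) (.name (.inl (s, d))) a p' ↔
      ∃ x : Option B × Option D × Move × M.Q, M.trans s d x.1 x.2.1 x.2.2.1 x.2.2.2 ∧
        a = Option.map CAct.base x.1 ∧ p' = wExp cr cw cm M x.2.1 x.2.2.1 x.2.2.2 := by
  rw [step_name_iff]
  simp only [EfcT, combineSpec, fcSpec, Option.map_some, Option.some.injEq,
    exists_eq_left']
  have key : ∀ q : PExp C (Sym D) B ((M.Q × Option D) ⊕ Tape D),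
      (∃ b e mv t, M.trans s d b e mv t ∧
        PExp.pref (Option.map CAct.base b) (wExp cr cw cm M e mv t) = q) →
      (Step (combineSpec (fcSpec M cr cw cm) (infTapeSpec C B D cr cw cm)) q a p' ↔
        (∃ b e mv t, M.trans s d b e mv t ∧
          PExp.pref (Option.map CAct.base b) (wExp cr cw cm M e mv t) = q ∧
          a = Option.map CAct.base b ∧ p' = wExp cr cw cm M e mv t)) := by
    rintro q ⟨b, e, mv, t, htr, rfl⟩
    rw [step_pref_iff]
    constructor
    · rintro ⟨rfl, rfl⟩; exact ⟨b, e, mv, t, htr, rfl, rfl, rfl⟩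
    · rintro ⟨b', e', mv', t', -, heq, rfl, rfl⟩
      injection heq with h1 h2
      exact ⟨h1, h2⟩
  by_cases hfin : s ∈ M.final
  all_goals
    first | rw [if_pos hfin] | rw [if_neg hfin]
    simp only [PExp.mapNames, step_alt_iff, step_emp_iff, or_false, mapNames_bigAlt,
      List.map_map, step_bigAlt_iff, List.mem_map, Finset.mem_toList,
      Set.Finite.mem_toFinset, Set.mem_setOf_eq, Function.comp_def, mapNames_sumList]
    constructor
    · rintro ⟨q, ⟨x, hx, rfl⟩, hs⟩
      rw [key _ ⟨x.1, x.2.1, x.2.2.1, x.2.2.2, hx, by simp [wExp, mExp, rExp]⟩] at hs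
      obtain ⟨b, e, mv, t, htr, -, rfl, rfl⟩ := hs
      exact ⟨(b, e, mv, t), htr, rfl, rfl⟩
    · rintro ⟨⟨b, e, mv, t⟩, htr, rfl, rfl⟩
      exact ⟨_, ⟨(b, e, mv, t), htr, rfl⟩, by
        rw [key _ ⟨b, e, mv, t, htr, by simp [wExp, mExp, rExp]⟩]
        exact ⟨b, e, mv, t, htr, by simp [wExp, mExp, rExp], rfl, rfl⟩⟩

lemma tape_step_iff {cr cw cm : C} {M : RTM B D} {tp : Tape D} {a p'} :
    Step (EfcT M cr cw cm) (.name (.inr tp)) a p' ↔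
      (a = some (.send cr (.dat tp.head)) ∧ p' = .name (.inr tp)) ∨
      (∃ e, a = some (.recv cw (.dat e)) ∧ p' = .name (.inr ⟨tp.left, e, tp.right⟩)) ∨
      (a = some (.recv cm .mvL) ∧ p' = .name (.inr (tp.writeMove tp.head .L))) ∨
      (a = some (.recv cm .mvR) ∧ p' = .name (.inr (tp.writeMove tp.head .R))) := by
  rw [step_name_iff]
  simp [EfcT, combineSpec, infTapeSpec, PExp.mapNames, mapNames_sumList,
    step_alt_iff, step_emp_iff, step_pref_iff, step_sumList_iff, mem_allOf,
    or_assoc, and_assoc]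

lemma ctrl_term_iff {cr cw cm : C} {M : RTM B D} {s : M.Q} {d : Option D} :
    Term (EfcT M cr cw cm) (.name (.inl (s, d))) ↔ s ∈ M.final := by
  rw [term_name_iff]
  simp only [EfcT, combineSpec, fcSpec, Option.map_some, Option.some.injEq,
    exists_eq_left']
  by_cases hfin : s ∈ M.final
  · rw [if_pos hfin]
    simp [hfin, PExp.mapNames, term_alt_iff, term_emp]
  · rw [if_neg hfin]
    simp only [PExp.mapNames, mapNames_bigAlt, List.map_map, term_bigAlt_iff,
      List.mem_map, Function.comp_def]
    constructor
    · rintro ⟨q, ⟨x, -, rfl⟩, ht⟩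
      exact absurd ht (term_pref_iff.mp · )
    · exact fun h => absurd h hfin

lemma tape_term {cr cw cm : C} {M : RTM B D} {tp : Tape D} :
    Term (EfcT M cr cw cm) (.name (.inr tp)) := by
  rw [term_name_iff]
  refine ⟨_, rfl, ?_⟩
  simp [infTapeSpec, PExp.mapNames, term_alt_iff, term_emp]

end Main
section Par
variable {C D B : Type} [Fintype D] [Fintype B]

def CS (cr cw cm : C) : Set C := {cr, cw, cm}

noncomputable def P0e (cr cw cm : C) (M : RTM B D) (s : M.Q) (tp : Tape D) :
    PExp C (Sym D) B ((M.Q × Option D) ⊕ Tape D) :=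
  .par (CS cr cw cm) (.name (.inl (s, tp.head))) (.name (.inr tp))

noncomputable def P1e (cr cw cm : C) (M : RTM B D) (e : Option D) (mv : Move)
    (t : M.Q) (tp : Tape D) : PExp C (Sym D) B ((M.Q × Option D) ⊕ Tape D) :=
  .par (CS cr cw cm) (wExp cr cw cm M e mv t) (.name (.inr tp))

noncomputable def P2e (cr cw cm : C) (M : RTM B D) (mv : Move)
    (t : M.Q) (tp : Tape D) : PExp C (Sym D) B ((M.Q × Option D) ⊕ Tape D) :=
  .par (CS cr cw cm) (mExp cr cm M mv t) (.name (.inr tp))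

noncomputable def P3e (cr cw cm : C) (M : RTM B D)
    (t : M.Q) (tp : Tape D) : PExp C (Sym D) B ((M.Q × Option D) ⊕ Tape D) :=
  .par (CS cr cw cm) (rExp cr M t) (.name (.inr tp))

lemma isComm_base {cr cw cm : C} {b : Option B} :
    ¬ IsComm (CS cr cw cm) (Option.map CAct.base b : Option (CAct C (Sym D) B)) := by
  cases b <;> exact fun h => h

lemma tape_label_comm {cr cw cm : C} {M : RTM B D} {tp : Tape D} {a p'}
    (h : Step (EfcT M cr cw cm) (.name (.inr tp)) a p') : IsComm (CS cr cw cm) a := by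
  rcases tape_step_iff.mp h with ⟨rfl, -⟩ | ⟨e, rfl, -⟩ | ⟨rfl, -⟩ | ⟨rfl, -⟩ <;>
    simp [IsComm, CS]

lemma stepP0_iff {cr cw cm : C} {M : RTM B D} {s : M.Q} {tp : Tape D} {a r} :
    Step (EfcT M cr cw cm) (P0e cr cw cm M s tp) a r ↔
      ∃ x : Option B × Option D × Move × M.Q, M.trans s tp.head x.1 x.2.1 x.2.2.1 x.2.2.2 ∧
        a = Option.map CAct.base x.1 ∧
        r = P1e cr cw cm M x.2.1 x.2.2.1 x.2.2.2 tp := by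
  rw [P0e, step_par_iff]
  constructor
  · rintro (⟨hnc, p', h, rfl⟩ | ⟨hnc, q', h, rfl⟩ |
      ⟨rfl, c, hc, dv, p', q', rfl, (⟨hp, hq⟩ | ⟨hp, hq⟩)⟩)
    · obtain ⟨x, htr, rfl, rfl⟩ := ctrl_step_iff.mp h
      exact ⟨x, htr, rfl, rfl⟩
    · exact absurd (tape_label_comm h) hnc
    · obtain ⟨⟨b, y⟩, -, heq, -⟩ := ctrl_step_iff.mp hp
      cases b <;> simp at heq
    · obtain ⟨⟨b, y⟩, -, heq, -⟩ := ctrl_step_iff.mp hp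
      cases b <;> simp at heq
  · rintro ⟨x, htr, rfl, rfl⟩
    exact Or.inl ⟨isComm_base, _, ctrl_step_iff.mpr ⟨x, htr, rfl, rfl⟩, rfl⟩

lemma stepP1_iff {cr cw cm : C} {M : RTM B D} {e : Option D} {mv : Move}
    {t : M.Q} {tp : Tape D} {a r} :
    Step (EfcT M cr cw cm) (P1e cr cw cm M e mv t tp) a r ↔
      a = none ∧ r = P2e cr cw cm M mv t ⟨tp.left, e, tp.right⟩ := by
  rw [P1e, step_par_iff]
  constructor
  · rintro (⟨hnc, p', h, rfl⟩ | ⟨hnc, q', h, rfl⟩ |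
      ⟨rfl, c, hc, dv, p', q', rfl, (⟨hp, hq⟩ | ⟨hp, hq⟩)⟩)
    · rw [wExp, step_pref_iff] at h
      exact absurd (h.1 ▸ (by simp [IsComm, CS] : IsComm (CS cr cw cm)
        (some (CAct.send cw (Sym.dat e) : CAct C (Sym D) B)))) hnc
    · exact absurd (tape_label_comm h) hnc
    · rw [wExp, step_pref_iff] at hp
      obtain ⟨heq, rfl⟩ := hp
      obtain ⟨rfl, rfl⟩ : c = cw ∧ dv = Sym.dat e := by
        injection heq with h'; injection h' with h1 h2; exact ⟨h1, h2⟩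
      rcases tape_step_iff.mp hq with ⟨heq', -⟩ | ⟨e', heq', rfl⟩ | ⟨heq', -⟩ | ⟨heq', -⟩
      · injection heq' with h'; injection h'
      · obtain rfl : e' = e := by
          injection heq' with h'; injection h' with h1 h2; injection h2 with h3
          all_goals exact h3.symm
        exact ⟨rfl, rfl⟩
      · injection heq' with h'; injection h' with h1 h2; injection h2
      · injection heq' with h'; injection h' with h1 h2; injection h2
    · rw [wExp, step_pref_iff] at hp
      obtain ⟨heq, -⟩ := hp
      injection heq with h'; injection h'
  · rintro ⟨rfl, rfl⟩
    refine Or.inr (Or.inr ⟨rfl, cw, by simp [CS], Sym.dat e, _, _, rfl, Or.inl ⟨?_, ?_⟩⟩)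
    · simp only [wExp]; exact step_pref_iff.mpr ⟨rfl, rfl⟩
    · exact tape_step_iff.mpr (Or.inr (Or.inl ⟨e, rfl, rfl⟩))

lemma stepP2_iff {cr cw cm : C} {M : RTM B D} {mv : Move}
    {t : M.Q} {tp : Tape D} {a r} :
    Step (EfcT M cr cw cm) (P2e cr cw cm M mv t tp) a r ↔
      a = none ∧ r = P3e cr cw cm M t (tp.writeMove tp.head mv) := by
  rw [P2e, step_par_iff]
  constructor
  · rintro (⟨hnc, p', h, rfl⟩ | ⟨hnc, q', h, rfl⟩ |
      ⟨rfl, c, hc, dv, p', q', rfl, (⟨hp, hq⟩ | ⟨hp, hq⟩)⟩)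
    · rw [mExp, step_pref_iff] at h
      exact absurd (h.1 ▸ (by simp [IsComm, CS] : IsComm (CS cr cw cm)
        (some (CAct.send cm (movSym mv) : CAct C (Sym D) B)))) hnc
    · exact absurd (tape_label_comm h) hnc
    · rw [mExp, step_pref_iff] at hp
      obtain ⟨heq, rfl⟩ := hp
      obtain ⟨rfl, rfl⟩ : c = cm ∧ dv = movSym mv := by
        injection heq with h'; injection h' with h1 h2; exact ⟨h1, h2⟩
      rcases tape_step_iff.mp hq with ⟨heq', -⟩ | ⟨e', heq', -⟩ | ⟨heq', rfl⟩ | ⟨heq', rfl⟩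
      · injection heq' with h'; injection h'
      · exfalso
        injection heq' with h'; injection h' with h1 h2
        cases mv <;> simp [movSym] at h2
      · obtain rfl : mv = Move.L := by
          injection heq' with h'; injection h' with h1 h2
          cases mv
          · rfl
          · simp [movSym] at h2
        exact ⟨rfl, rfl⟩
      · obtain rfl : mv = Move.R := by
          injection heq' with h'; injection h' with h1 h2
          cases mv
          · simp [movSym] at h2
          · rfl
        exact ⟨rfl, rfl⟩
    · rw [mExp, step_pref_iff] at hp
      obtain ⟨heq, -⟩ := hp
      injection heq with h'; injection h'
  · rintro ⟨rfl, rfl⟩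
    refine Or.inr (Or.inr ⟨rfl, cm, by simp [CS], movSym mv, _, _, rfl, Or.inl ⟨?_, ?_⟩⟩)
    · simp only [mExp]; exact step_pref_iff.mpr ⟨rfl, rfl⟩
    · cases mv
      · exact tape_step_iff.mpr (Or.inr (Or.inr (Or.inl ⟨rfl, rfl⟩)))
      · exact tape_step_iff.mpr (Or.inr (Or.inr (Or.inr ⟨rfl, rfl⟩)))

lemma stepP3_iff {cr cw cm : C} {M : RTM B D} {t : M.Q} {tp : Tape D} {a r} :
    Step (EfcT M cr cw cm) (P3e cr cw cm M t tp) a r ↔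
      a = none ∧ r = P0e cr cw cm M t tp := by
  rw [P3e, step_par_iff]
  constructor
  · rintro (⟨hnc, p', h, rfl⟩ | ⟨hnc, q', h, rfl⟩ |
      ⟨rfl, c, hc, dv, p', q', rfl, (⟨hp, hq⟩ | ⟨hp, hq⟩)⟩)
    · rw [rExp, step_sumList_iff] at h
      obtain ⟨f, -, h⟩ := h
      rw [step_pref_iff] at h
      exact absurd (h.1 ▸ (by simp [IsComm, CS] : IsComm (CS cr cw cm)
        (some (CAct.recv cr (Sym.dat f) : CAct C (Sym D) B)))) hnc
    · exact absurd (tape_label_comm h) hnc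
    · rw [rExp, step_sumList_iff] at hp
      obtain ⟨f, -, hp⟩ := hp
      rw [step_pref_iff] at hp
      obtain ⟨heq, -⟩ := hp
      injection heq with h'; injection h'
    · rw [rExp, step_sumList_iff] at hp
      obtain ⟨f, -, hp⟩ := hp
      rw [step_pref_iff] at hp
      obtain ⟨heq, rfl⟩ := hp
      obtain ⟨rfl, rfl⟩ : c = cr ∧ dv = Sym.dat f := by
        injection heq with h'; injection h' with h1 h2; exact ⟨h1, h2⟩
      rcases tape_step_iff.mp hq with ⟨heq', rfl⟩ | ⟨e', heq', -⟩ | ⟨heq', -⟩ | ⟨heq', -⟩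
      · obtain rfl : f = tp.head := by
          injection heq' with h'; injection h' with h1 h2; injection h2 with h3
          all_goals exact h3
        exact ⟨rfl, rfl⟩
      · injection heq' with h'; injection h'
      · injection heq' with h'; injection h'
      · injection heq' with h'; injection h'
  · rintro ⟨rfl, rfl⟩
    refine Or.inr (Or.inr ⟨rfl, cr, by simp [CS], Sym.dat tp.head, _, _, rfl, Or.inr ⟨?_, ?_⟩⟩)
    · rw [rExp, step_sumList_iff]
      exact ⟨tp.head, mem_allOf _, step_pref_iff.mpr ⟨rfl, rfl⟩⟩
    · exact tape_step_iff.mpr (Or.inl ⟨rfl, rfl⟩)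

lemma termP0_iff {cr cw cm : C} {M : RTM B D} {s : M.Q} {tp : Tape D} :
    Term (EfcT M cr cw cm) (P0e cr cw cm M s tp) ↔ s ∈ M.final := by
  rw [P0e, term_par_iff, ctrl_term_iff]
  simp [tape_term]

lemma termP1 {cr cw cm : C} {M : RTM B D} {e mv t tp} :
    ¬ Term (EfcT M cr cw cm) (P1e cr cw cm M e mv t tp) := by
  rw [P1e, term_par_iff, wExp]
  simp [term_pref_iff]

lemma termP2 {cr cw cm : C} {M : RTM B D} {mv t tp} :
    ¬ Term (EfcT M cr cw cm) (P2e cr cw cm M mv t tp) := by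
  rw [P2e, term_par_iff, mExp]
  simp [term_pref_iff]

lemma termP3 {cr cw cm : C} {M : RTM B D} {t tp} :
    ¬ Term (EfcT M cr cw cm) (P3e cr cw cm M t tp) := by
  rw [P3e, term_par_iff, rExp]
  simp [term_sumList_iff, term_pref_iff]

lemma wm_irrel {D : Type} (tp : Tape D) (e e' : Option D) (mv : Move) :
    (Tape.mk tp.left e tp.right).writeMove e' mv = tp.writeMove e' mv := by
  obtain ⟨l, h, r⟩ := tp
  cases mv <;> rfl

end Par
section MainProof
variable {C D B : Type} [Fintype D] [Fintype B]

/-- The bisimulation relation. -/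
def Rel (cr cw cm : C) (M : RTM B D) (c : M.Q × Tape D)
    (p : PExp C (Sym D) B ((M.Q × Option D) ⊕ Tape D)) : Prop :=
  (p = P0e cr cw cm M c.1 c.2) ∨
  (∃ e mv t tp, c = (t, tp.writeMove e mv) ∧ p = P1e cr cw cm M e mv t tp) ∨
  (∃ mv t tp, c = (t, tp.writeMove tp.head mv) ∧ p = P2e cr cw cm M mv t tp) ∨
  (p = P3e cr cw cm M c.1 c.2)

lemma T1_step_iff {M : RTM B D} {c c' : M.Q × Tape D} {a} :
    (M.lts.relabel (CAct.base : B → CAct C (Sym D) B)).tr c a c' ↔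
      ∃ x : Option B × Option D × Move × M.Q,
        M.trans c.1 c.2.head x.1 x.2.1 x.2.2.1 x.2.2.2 ∧
        a = Option.map CAct.base x.1 ∧ c' = (x.2.2.2, c.2.writeMove x.2.1 x.2.2.1) := by
  constructor
  · rintro ⟨a₀, ⟨e, mv, htr, h2⟩, rfl⟩
    exact ⟨(a₀, e, mv, c'.1), htr, rfl, Prod.ext rfl h2⟩
  · rintro ⟨⟨b, e, mv, t⟩, htr, rfl, rfl⟩
    exact ⟨b, ⟨e, mv, htr, rfl⟩, rfl⟩

lemma stable {cr cw cm : C} {M : RTM B D}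
    {P₀ : PExp C (Sym D) B ((M.Q × Option D) ⊕ Tape D)}
    (c : M.Q × Tape D) (q : (pLTS (EfcT M cr cw cm) P₀).State)
    (h : Rel cr cw cm M c q.1) :
    ∃ q' : (pLTS (EfcT M cr cw cm) P₀).State,
      (pLTS (EfcT M cr cw cm) P₀).tauReach q q' ∧
      q'.1 = P0e cr cw cm M c.1 c.2 := by
  rcases h with h0 | ⟨e, mv, t, tp, hc, hp⟩ | ⟨mv, t, tp, hc, hp⟩ | h3
  · exact ⟨q, Relation.ReflTransGen.refl, h0⟩
  · subst hc
    have st0 : Step (EfcT M cr cw cm) q.1 none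
        (P2e cr cw cm M mv t ⟨tp.left, e, tp.right⟩) := by
      rw [hp]; exact stepP1_iff.mpr ⟨rfl, rfl⟩
    have st1 : Step (EfcT M cr cw cm) (P2e cr cw cm M mv t ⟨tp.left, e, tp.right⟩) none
        (P3e cr cw cm M t ((⟨tp.left, e, tp.right⟩ : Tape D).writeMove
          (⟨tp.left, e, tp.right⟩ : Tape D).head mv)) :=
      stepP2_iff.mpr ⟨rfl, rfl⟩
    have st2 : Step (EfcT M cr cw cm)
        (P3e cr cw cm M t ((⟨tp.left, e, tp.right⟩ : Tape D).writeMove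
          (⟨tp.left, e, tp.right⟩ : Tape D).head mv)) none
        (P0e cr cw cm M t ((⟨tp.left, e, tp.right⟩ : Tape D).writeMove
          (⟨tp.left, e, tp.right⟩ : Tape D).head mv)) :=
      stepP3_iff.mpr ⟨rfl, rfl⟩
    let q1 : (pLTS (EfcT M cr cw cm) P₀).State := ⟨_, reach_tail q.2 st0⟩
    let q2 : (pLTS (EfcT M cr cw cm) P₀).State := ⟨_, reach_tail q1.2 st1⟩
    let q3 : (pLTS (EfcT M cr cw cm) P₀).State := ⟨_, reach_tail q2.2 st2⟩
    refine ⟨q3, Relation.ReflTransGen.head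
        (show (pLTS (EfcT M cr cw cm) P₀).tauStep q q1 from st0)
        (Relation.ReflTransGen.head
          (show (pLTS (EfcT M cr cw cm) P₀).tauStep q1 q2 from st1)
          (Relation.ReflTransGen.single
            (show (pLTS (EfcT M cr cw cm) P₀).tauStep q2 q3 from st2))), ?_⟩
    show P0e cr cw cm M t ((⟨tp.left, e, tp.right⟩ : Tape D).writeMove
        (⟨tp.left, e, tp.right⟩ : Tape D).head mv) = _
    rw [wm_irrel]
  · subst hc
    have st1 : Step (EfcT M cr cw cm) q.1 none
        (P3e cr cw cm M t (tp.writeMove tp.head mv)) := by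
      rw [hp]; exact stepP2_iff.mpr ⟨rfl, rfl⟩
    have st2 : Step (EfcT M cr cw cm) (P3e cr cw cm M t (tp.writeMove tp.head mv)) none
        (P0e cr cw cm M t (tp.writeMove tp.head mv)) :=
      stepP3_iff.mpr ⟨rfl, rfl⟩
    let q2 : (pLTS (EfcT M cr cw cm) P₀).State := ⟨_, reach_tail q.2 st1⟩
    let q3 : (pLTS (EfcT M cr cw cm) P₀).State := ⟨_, reach_tail q2.2 st2⟩
    exact ⟨q3, Relation.ReflTransGen.head
        (show (pLTS (EfcT M cr cw cm) P₀).tauStep q q2 from st1)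
        (Relation.ReflTransGen.single
          (show (pLTS (EfcT M cr cw cm) P₀).tauStep q2 q3 from st2)), rfl⟩
  · have st2 : Step (EfcT M cr cw cm) q.1 none (P0e cr cw cm M c.1 c.2) := by
      rw [h3]; exact stepP3_iff.mpr ⟨rfl, rfl⟩
    let q3 : (pLTS (EfcT M cr cw cm) P₀).State := ⟨_, reach_tail q.2 st2⟩
    exact ⟨q3, Relation.ReflTransGen.single
      (show (pLTS (EfcT M cr cw cm) P₀).tauStep q q3 from st2), rfl⟩

end MainProof
/-- For every reactive Turing machine `M`, the transition
system `T(M)` is divergence-preserving branching bisimilar to the LTS of the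
parallel composition of `M`'s finite control with the (empty) tape process. -/
theorem RTM_dpbbisim_finite_control_with_tape
    {C D B : Type} [Fintype D] [Fintype B] (cr cw cm : C)
    (hdist : List.Pairwise (· ≠ ·) [cr, cw, cm]) (M : RTM B D) :
    DPBranchingBisimilar
      (M.lts.relabel (CAct.base : B → CAct C (Sym D) B))
      (pLTS (EfcT (C := C) M cr cw cm)
        (.par {cr, cw, cm} (.name (.inl (M.init, (none : Option D))))
          (.name (.inr (Tape.empty D))))) := by
  set T₁ := M.lts.relabel (CAct.base : B → CAct C (Sym D) B) with hT₁
  set Pin : PExp C (Sym D) B ((M.Q × Option D) ⊕ Tape D) :=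
    .par {cr, cw, cm} (.name (.inl (M.init, (none : Option D))))
      (.name (.inr (Tape.empty D))) with hPin
  set T₂ := pLTS (EfcT (C := C) M cr cw cm) Pin with hT₂
  refine ⟨fun c q => Rel cr cw cm M c q.1, ⟨?_, ?_, ?_, ?_⟩, ⟨?_, ?_⟩, ?_⟩
  -- fwd
  · intro s1 s2 a s1' hR hstep
    obtain ⟨q', hq', heq⟩ := stable s1 s2 hR
    obtain ⟨x, htr, ha, hc'⟩ := T1_step_iff.mp hstep
    have hstep2 : Step (EfcT M cr cw cm) q'.1 a
        (P1e cr cw cm M x.2.1 x.2.2.1 x.2.2.2 s1.2) := by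
      rw [heq]; exact stepP0_iff.mpr ⟨x, htr, ha, rfl⟩
    refine ⟨q', ⟨_, reach_tail q'.2 hstep2⟩, hq', Or.inl hstep2, Or.inl heq, ?_⟩
    exact Or.inr (Or.inl ⟨x.2.1, x.2.2.1, x.2.2.2, s1.2, hc', rfl⟩)
  -- bwd
  · intro s1 s2 a s2' hR hstep
    have hstep' : Step (EfcT M cr cw cm) s2.1 a s2'.1 := hstep
    rcases hR with h0 | ⟨e, mv, t, tp, hc, hp⟩ | ⟨mv, t, tp, hc, hp⟩ | h3
    · rw [h0] at hstep'
      obtain ⟨x, htr, ha, hr⟩ := stepP0_iff.mp hstep'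
      refine ⟨s1, (x.2.2.2, s1.2.writeMove x.2.1 x.2.2.1), Relation.ReflTransGen.refl,
        Or.inl (T1_step_iff.mpr ⟨x, htr, ha, rfl⟩), Or.inl h0, ?_⟩
      rw [hr]
      exact Or.inr (Or.inl ⟨x.2.1, x.2.2.1, x.2.2.2, s1.2, rfl, rfl⟩)
    · rw [hp] at hstep'
      obtain ⟨rfl, hr⟩ := stepP1_iff.mp hstep'
      refine ⟨s1, s1, Relation.ReflTransGen.refl, Or.inr ⟨rfl, rfl⟩,
        Or.inr (Or.inl ⟨e, mv, t, tp, hc, hp⟩), ?_⟩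
      rw [hr]
      refine Or.inr (Or.inr (Or.inl ⟨mv, t, ⟨tp.left, e, tp.right⟩, ?_, rfl⟩))
      rw [hc]
      exact Prod.ext rfl (wm_irrel tp e e mv).symm
    · rw [hp] at hstep'
      obtain ⟨rfl, hr⟩ := stepP2_iff.mp hstep'
      refine ⟨s1, s1, Relation.ReflTransGen.refl, Or.inr ⟨rfl, rfl⟩,
        Or.inr (Or.inr (Or.inl ⟨mv, t, tp, hc, hp⟩)), ?_⟩
      rw [hr, hc]
      exact Or.inr (Or.inr (Or.inr rfl))
    · rw [h3] at hstep'
      obtain ⟨rfl, hr⟩ := stepP3_iff.mp hstep'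
      refine ⟨s1, s1, Relation.ReflTransGen.refl, Or.inr ⟨rfl, rfl⟩,
        Or.inr (Or.inr (Or.inr h3)), ?_⟩
      rw [hr]
      exact Or.inl rfl
  -- finFwd
  · intro s1 s2 hR hfin
    obtain ⟨q', hq', heq⟩ := stable s1 s2 hR
    refine ⟨q', hq', Or.inl heq, ?_⟩
    show Term (EfcT M cr cw cm) q'.1
    rw [heq]
    exact termP0_iff.mpr hfin
  -- finBwd
  · intro s1 s2 hR hfin
    have hfin' : Term (EfcT M cr cw cm) s2.1 := hfin
    rcases hR with h0 | ⟨e, mv, t, tp, hc, hp⟩ | ⟨mv, t, tp, hc, hp⟩ | h3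
    · rw [h0] at hfin'
      exact ⟨s1, Relation.ReflTransGen.refl, Or.inl h0, termP0_iff.mp hfin'⟩
    · rw [hp] at hfin'; exact absurd hfin' termP1
    · rw [hp] at hfin'; exact absurd hfin' termP2
    · rw [h3] at hfin'; exact absurd hfin' termP3
  -- divergence 1 (left diverges)
  · intro s2 f hsteps hRs
    rcases hRs 0 with h0 | ⟨e, mv, t, tp, hc, hp⟩ | ⟨mv, t, tp, hc, hp⟩ | h3
    · have hst : T₁.tr (f 0) none (f 1) := hsteps 0
      obtain ⟨x, htr, ha, hc'⟩ := T1_step_iff.mp hst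
      have st : Step (EfcT M cr cw cm) s2.1 none
          (P1e cr cw cm M x.2.1 x.2.2.1 x.2.2.2 (f 0).2) := by
        rw [h0]; exact stepP0_iff.mpr ⟨x, htr, ha, rfl⟩
      refine ⟨⟨_, reach_tail s2.2 st⟩, Relation.TransGen.single st, 1, ?_⟩
      exact Or.inr (Or.inl ⟨x.2.1, x.2.2.1, x.2.2.2, (f 0).2, hc', rfl⟩)
    · have st : Step (EfcT M cr cw cm) s2.1 none
          (P2e cr cw cm M mv t ⟨tp.left, e, tp.right⟩) := by
        rw [hp]; exact stepP1_iff.mpr ⟨rfl, rfl⟩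
      refine ⟨⟨_, reach_tail s2.2 st⟩, Relation.TransGen.single st, 0, ?_⟩
      refine Or.inr (Or.inr (Or.inl ⟨mv, t, ⟨tp.left, e, tp.right⟩, ?_, rfl⟩))
      rw [hc]
      exact Prod.ext rfl (wm_irrel tp e e mv).symm
    · have st : Step (EfcT M cr cw cm) s2.1 none
          (P3e cr cw cm M t (tp.writeMove tp.head mv)) := by
        rw [hp]; exact stepP2_iff.mpr ⟨rfl, rfl⟩
      refine ⟨⟨_, reach_tail s2.2 st⟩, Relation.TransGen.single st, 0, ?_⟩
      rw [hc]
      exact Or.inr (Or.inr (Or.inr rfl))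
    · have st : Step (EfcT M cr cw cm) s2.1 none (P0e cr cw cm M (f 0).1 (f 0).2) := by
        rw [h3]; exact stepP3_iff.mpr ⟨rfl, rfl⟩
      exact ⟨⟨_, reach_tail s2.2 st⟩, Relation.TransGen.single st, 0, Or.inl rfl⟩
  -- divergence 2 (right diverges)
  · intro s1 f hsteps hRs
    have hsteps' : ∀ i, Step (EfcT M cr cw cm) (f i).1 none (f (i + 1)).1 :=
      fun i => hsteps i
    have core : ∀ i, (f i).1 = P0e cr cw cm M s1.1 s1.2 →
        ∃ s1', Relation.TransGen T₁.tauStep s1 s1' ∧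
          ∃ j, Rel cr cw cm M s1' (f j).1 := by
      intro i hi
      have hst := hsteps' i
      rw [hi] at hst
      obtain ⟨x, htr, ha, hr⟩ := stepP0_iff.mp hst
      obtain ⟨b, e, mv, t⟩ := x
      obtain rfl : b = none := by
        cases b with
        | none => rfl
        | some b' => simp at ha
      have lstep : T₁.tr s1 none (t, s1.2.writeMove e mv) :=
        T1_step_iff.mpr ⟨(none, e, mv, t), htr, rfl, rfl⟩
      exact ⟨(t, s1.2.writeMove e mv), Relation.TransGen.single lstep, i + 1,
        Or.inr (Or.inl ⟨e, mv, t, s1.2, rfl, hr⟩)⟩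
    rcases hRs 0 with h0 | ⟨e, mv, t, tp, hc, hp⟩ | ⟨mv, t, tp, hc, hp⟩ | h3
    · exact core 0 h0
    · subst hc
      have h01 := hsteps' 0
      rw [hp] at h01
      obtain ⟨-, h1⟩ := stepP1_iff.mp h01
      have h12 := hsteps' 1
      rw [h1] at h12
      obtain ⟨-, h2⟩ := stepP2_iff.mp h12
      have h23 := hsteps' 2
      rw [h2] at h23
      obtain ⟨-, h3'⟩ := stepP3_iff.mp h23
      refine core 3 ?_
      rw [h3', wm_irrel]
    · subst hc
      have h01 := hsteps' 0
      rw [hp] at h01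
      obtain ⟨-, h2⟩ := stepP2_iff.mp h01
      have h12 := hsteps' 1
      rw [h2] at h12
      obtain ⟨-, h3'⟩ := stepP3_iff.mp h12
      exact core 2 h3'
    · have h01 := hsteps' 0
      rw [h3] at h01
      obtain ⟨-, h1⟩ := stepP3_iff.mp h01
      exact core 1 h1
  -- initial states
  · exact Or.inl rfl

end RTMPaper
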